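/- arXiv:1011.6055 — 2 statements merged into one kernel-verified Lean document; each statement's English description precedes it below -/
import Mathlib

section
/- Two nonzero rank-one operators x₁⊙y₁ on a Hilbert space E₁ and x₂⊙y₂ on a Hilbert space E₂ are unitarily equivalent if and only if: dim E₁ = dim E₂, ‖x₁‖‖y₁‖ = ‖x₂‖‖y₂‖, and ⟨x₁, y₁⟩ = ⟨x₂, y₂⟩. -/
open MeasureTheory Complex Submodule
open scoped ENNReal
open scoped ComplexConjugate

noncomputable section

instance : Fact (0 < 2 * Real.pi) := ⟨by positivity⟩

abbrev 𝕋m := AddCircle (2 * Real.pi)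
abbrev μT : Measure 𝕋m := AddCircle.haarAddCircle
abbrev L2 : Type := Lp ℂ 2 μT

open scoped Classical in
/-- Embedding of a.e.-defined functions into `L²`, with junk value `0` when not in `L²`. -/
def toL2 (g : 𝕋m → ℂ) : L2 := if h : MemLp g 2 μT then h.toLp g else 0

/-- The coordinate function `z^j` on the circle. -/
def zc (j : ℤ) : 𝕋m → ℂ := fun x => fourier j x

/-- Pointwise product in `L²` (junk value if the product is not square integrable). -/
def mulL2 (f g : L2) : L2 := toL2 (fun x => f x * g x)

/-- Essential boundedness. -/
def BddAE (f : L2) : Prop := ∃ C : ℝ, ∀ᵐ x ∂μT, ‖f x‖ ≤ C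

/-- The span of the negative frequencies. -/
def negSpan : Submodule ℂ L2 :=
  Submodule.span ℂ {f : L2 | ∃ n : ℤ, n < 0 ∧ f = fourierLp 2 n}

/-- The Hardy space `H²` inside `L²(𝕋)`. -/
def H2 : Submodule ℂ L2 := negSpanᗮ

/-- The subspace `w·V` of `L²`. -/
def mulSet (w : 𝕋m → ℂ) (V : Submodule ℂ L2) : Submodule ℂ L2 :=
  Submodule.span ℂ {f : L2 | ∃ g ∈ V, f = toL2 (fun x => w x * g x)}

/-- The subspace `Θ·H²` of `L²`. -/
def SH2 (Θ : L2) : Submodule ℂ L2 := mulSet (⇑Θ) H2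

/-- An inner function: a member of `H²` with unimodular boundary values. -/
def IsInner (Θ : L2) : Prop := Θ ∈ H2 ∧ ∀ᵐ x ∂μT, ‖Θ x‖ = 1

/-- The model space `K_Θ = H² ⊖ ΘH²`, realized as an orthogonal complement. -/
def Ksp (Θ : L2) : Submodule ℂ L2 := (negSpan ⊔ SH2 Θ)ᗮ

instance KspComplete (Θ : L2) : CompleteSpace (Ksp Θ) :=
  inferInstanceAs (CompleteSpace ((negSpan ⊔ SH2 Θ)ᗮ))

instance KspHasProj (Θ : L2) : HasOrthogonalProjection (Ksp Θ) :=
  HasOrthogonalProjection.ofCompleteSpace (Ksp Θ)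

/-- The orthogonal projection of `L²` onto `K_Θ`. -/
def PK (Θ : L2) : L2 →L[ℂ] Ksp Θ := orthogonalProjection (Ksp Θ)

/-- The truncated Toeplitz operator with symbol `φ`, with values in `K_Θ`. -/
def TTOsub (Θ φ : L2) (f : L2) : Ksp Θ := PK Θ (toL2 (fun x => φ x * f x))

/-- The truncated Toeplitz operator with symbol `φ`, as an `L²`-valued map. -/
def TTO (Θ φ : L2) (f : L2) : L2 := (TTOsub Θ φ f : L2)

/-- `T` is the (necessarily bounded) extension of the truncated Toeplitz operator `A_φ^Θ`
from its dense domain `K_Θ ∩ H^∞`. -/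
def ExtendsTTO (Θ φ : L2) (T : Ksp Θ →L[ℂ] Ksp Θ) : Prop :=
  ∀ f : Ksp Θ, BddAE (f : L2) → T f = TTOsub Θ φ (f : L2)

/-- The truncated Toeplitz operator `A_φ^Θ` is bounded. -/
def IsBddTTO (Θ φ : L2) : Prop := ∃ T : Ksp Θ →L[ℂ] Ksp Θ, ExtendsTTO Θ φ T

/-- The truncated Toeplitz operator `A_φ^Θ` is zero (on its dense domain). -/
def TTOIsZero (Θ φ : L2) : Prop := ∀ f : L2, f ∈ Ksp Θ → BddAE f → TTO Θ φ f = 0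

/-- `Θ(0)`, the value at the origin of the holomorphic extension. -/
def mval (f : L2) : ℂ := fourierCoeff (⇑f) 0

/-- `Θ'(0)`, the derivative at the origin of the holomorphic extension. -/
def dval (f : L2) : ℂ := fourierCoeff (⇑f) 1

/-- The reproducing kernel `k_0^Θ` of `K_Θ` at `0`. -/
def k0 (Θ : L2) : L2 := toL2 (fun x => 1 - conj (mval Θ) * Θ x)

/-- The conjugate kernel `k̃_0^Θ = (Θ - Θ(0))/z`. -/
def kt0 (Θ : L2) : L2 := toL2 (fun x => (Θ x - mval Θ) * conj (zc 1 x))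

/-- The power `B^j` (boundary values; for `j < 0` this is the conjugate power a.e.). -/
def BpowL2 (B : L2) (j : ℤ) : L2 := toL2 (fun x => B x ^ j)

/-- The composition `f ∘ B` determined by `z^j ↦ B^j`:  `f∘B = ∑ c_j(f) B^j`. -/
def compB (B f : L2) : L2 := ∑' j : ℤ, fourierCoeff (⇑f) j • BpowL2 B j

/-- The concrete realization of the Hilbert tensor product `K_B ⊗ L²` as `ℓ²(ℤ, K_B)`,
via the Fourier basis of the second factor. -/
abbrev TensKB (B : L2) : Type := lp (fun _ : ℤ => Ksp B) 2

/-- The elementary tensor `h ⊗ f ∈ K_B ⊗ L²` in the realization `ℓ²(ℤ, K_B)`. -/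
def elemTensor (B : L2) (h : Ksp B) (f : L2) : TensKB B :=
  ⟨fun j => fourierCoeff (⇑f) j • h, by
    apply memℓp_gen
    have h1 : Summable fun j : ℤ =>
        ‖(fourierBasis (hT := ⟨by positivity⟩)).repr f j‖ ^ (2 : ℝ≥0∞).toReal :=
      (memℓp_gen_iff (by norm_num)).1 (lp.memℓp ((fourierBasis (hT := ⟨by positivity⟩)).repr f))
    have h2 := h1.mul_right (‖h‖ ^ (2 : ℝ≥0∞).toReal)
    apply Summable.congr h2
    intro j
    rw [fourierBasis_repr]
    rw [norm_smul, ← Real.mul_rpow (norm_nonneg _) (norm_nonneg _)]⟩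

/-- The closed subspace `K_B ⊗ M` of `K_B ⊗ L² = ℓ²(ℤ, K_B)`. -/
def tensSp (B : L2) (M : Submodule ℂ L2) : Submodule ℂ (TensKB B) :=
  (Submodule.span ℂ {x : TensKB B | ∃ h : Ksp B, ∃ f ∈ M, x = elemTensor B h f}).topologicalClosure

/-- The set of complex conjugates of the members of `V`. -/
def conjSM (V : Submodule ℂ L2) : Submodule ℂ L2 :=
  Submodule.span ℂ {f : L2 | ∃ g ∈ V, f = toL2 (fun x => conj (g x))}

/-- The kernel of the truncated Toeplitz operator `A_φ^Θ`, inside `K_Θ`. -/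
def kerTTO (Θ φ : L2) : Submodule ℂ L2 :=
  Submodule.span ℂ {f : L2 | f ∈ Ksp Θ ∧ TTO Θ φ f = 0}


variable {E : Type*} [NormedAddCommGroup E] [InnerProductSpace ℂ E]

local notation "⟪" x ", " y "⟫" => @inner ℂ _ _ x y

private def extFun (G : Submodule ℂ E) [HasOrthogonalProjection G] (φ : G →ₗ[ℂ] G) : E →ₗ[ℂ] E :=
  G.subtype ∘ₗ φ ∘ₗ (orthogonalProjection G).toLinearMap
    + (LinearMap.id - G.subtype ∘ₗ (orthogonalProjection G).toLinearMap)

private lemma extFun_apply (G : Submodule ℂ E) [HasOrthogonalProjection G] (φ : G →ₗ[ℂ] G)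
    (x : E) : extFun G φ x = (φ (orthogonalProjection G x) : E) + (x - orthogonalProjection G x) :=
  rfl

private lemma extFun_norm (G : Submodule ℂ E) [HasOrthogonalProjection G] (φ : G →ₗ[ℂ] G)
    (hφ : ∀ g : G, ‖φ g‖ = ‖g‖) (x : E) : ‖extFun G φ x‖ = ‖x‖ := by
  have hmem : x - orthogonalProjection G x ∈ Gᗮ := sub_starProjection_mem_orthogonal (K := G) x
  have h1 : ‖extFun G φ x‖ * ‖extFun G φ x‖
      = ‖(φ (orthogonalProjection G x) : E)‖ * ‖(φ (orthogonalProjection G x) : E)‖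
        + ‖x - orthogonalProjection G x‖ * ‖x - orthogonalProjection G x‖ := by
    rw [extFun_apply]
    exact norm_add_sq_eq_norm_sq_add_norm_sq_of_inner_eq_zero _ _
      (inner_right_of_mem_orthogonal (φ (orthogonalProjection G x)).2 hmem)
  have h2 : ‖x‖ * ‖x‖ = ‖((orthogonalProjection G x : G) : E)‖ * ‖((orthogonalProjection G x : G) : E)‖
        + ‖x - orthogonalProjection G x‖ * ‖x - orthogonalProjection G x‖ := by
    have : x = ((orthogonalProjection G x : G) : E) + (x - orthogonalProjection G x) := by abel
    conv_lhs => rw [this]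
    exact norm_add_sq_eq_norm_sq_add_norm_sq_of_inner_eq_zero _ _
      (inner_right_of_mem_orthogonal (orthogonalProjection G x).2 hmem)
  have h3 : ‖(φ (orthogonalProjection G x) : E)‖ = ‖((orthogonalProjection G x : G) : E)‖ := by
    rw [Submodule.norm_coe, Submodule.norm_coe]; exact hφ _
  rw [h3] at h1
  exact (mul_self_inj (norm_nonneg _) (norm_nonneg _)).mp (h1.trans h2.symm)

private lemma extFun_comp (G : Submodule ℂ E) [HasOrthogonalProjection G] (φ ψ : G →ₗ[ℂ] G)
    (h : ∀ g, ψ (φ g) = g) (x : E) : extFun G ψ (extFun G φ x) = x := by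
  have hPcoe : ∀ g : G, orthogonalProjection G (g : E) = g := fun g =>
    orthogonalProjection_mem_subspace_eq_self g
  have hP0 : ∀ y ∈ Gᗮ, orthogonalProjection G y = 0 := fun y hy =>
    orthogonalProjectionOnto_apply_of_mem_orthogonal hy
  have hmem : x - orthogonalProjection G x ∈ Gᗮ := sub_starProjection_mem_orthogonal (K := G) x
  have hP : orthogonalProjection G (extFun G φ x) = φ (orthogonalProjection G x) := by
    rw [extFun_apply, map_add, hPcoe, hP0 _ hmem, add_zero]
  rw [extFun_apply, hP, h, extFun_apply]
  abel

/-- Extend a unitary of a subspace by the identity on the orthogonal complement. -/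
def extendU (G : Submodule ℂ E) [HasOrthogonalProjection G] (φ : G ≃ₗᵢ[ℂ] G) : E ≃ₗᵢ[ℂ] E :=
  LinearIsometryEquiv.ofSurjective
    ⟨extFun G φ.toLinearEquiv.toLinearMap, extFun_norm G _ (fun g => φ.norm_map g)⟩
    (fun x => ⟨extFun G φ.symm.toLinearEquiv.toLinearMap x,
      extFun_comp G _ _ (fun g => φ.apply_symm_apply g) x⟩)

lemma extendU_coe (G : Submodule ℂ E) [HasOrthogonalProjection G] (φ : G ≃ₗᵢ[ℂ] G) (g : G) :
    extendU G φ (g : E) = (φ g : E) := by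
  have : extendU G φ (g : E) = extFun G φ.toLinearEquiv.toLinearMap (g : E) := rfl
  rw [this, extFun_apply, orthogonalProjection_mem_subspace_eq_self]
  simp

lemma ortho_pair [CompleteSpace E] {n : ℕ} {w w' : Fin n → E}
    (hw : Orthonormal ℂ w) (hw' : Orthonormal ℂ w') :
    ∃ V : E ≃ₗᵢ[ℂ] E, ∀ i, V (w i) = w' i := by
  classical
  set G : Submodule ℂ E := Submodule.span ℂ (Set.range w ∪ Set.range w') with hG
  haveI : FiniteDimensional ℂ G :=
    FiniteDimensional.span_of_finite ℂ ((Set.finite_range w).union (Set.finite_range w'))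
  haveI : CompleteSpace G := FiniteDimensional.complete ℂ G
  have hwG : ∀ i, w i ∈ G := fun i =>
    Submodule.subset_span (Or.inl (Set.mem_range_self i))
  have hw'G : ∀ i, w' i ∈ G := fun i =>
    Submodule.subset_span (Or.inr (Set.mem_range_self i))
  set wG : Fin n → G := fun i => ⟨w i, hwG i⟩ with hwGdef
  set w'G : Fin n → G := fun i => ⟨w' i, hw'G i⟩ with hw'Gdef
  have hwGo : Orthonormal ℂ wG := by
    rw [orthonormal_iff_ite] at hw ⊢
    intro i j; exact hw i j
  have hw'Go : Orthonormal ℂ w'G := by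
    rw [orthonormal_iff_ite] at hw' ⊢
    intro i j; exact hw' i j
  set m := Module.finrank ℂ G with hm
  have hnm : n ≤ m := by
    simpa using hwGo.linearIndependent.fintype_card_le_finrank
  -- build the extended families
  have key : ∀ (v : Fin n → G), Orthonormal ℂ v →
      ∃ b : OrthonormalBasis (Fin m) ℂ G, ∀ i : Fin n, b (Fin.castLE hnm i) = v i := by
    intro v hv
    set u : Fin m → G := fun j => if h : (j : ℕ) < n then v ⟨j, h⟩ else 0 with hu
    have hs : Orthonormal ℂ ((Set.range (Fin.castLE hnm)).restrict u) := by
      rw [orthonormal_iff_ite] at hv ⊢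
      rintro ⟨j, i, rfl⟩ ⟨k, i', rfl⟩
      have h1 : u (Fin.castLE hnm i) = v i := by simp [hu]
      have h2 : u (Fin.castLE hnm i') = v i' := by simp [hu]
      show ⟪u (Fin.castLE hnm i), u (Fin.castLE hnm i')⟫ = _
      rw [h1, h2]
      rw [hv i i']
      congr 1
      simp only [eq_iff_iff, Subtype.mk.injEq]
      constructor
      · rintro rfl; rfl
      · intro h; exact Fin.castLE_injective hnm (congrArg Subtype.val h)
    obtain ⟨b, hb⟩ := Orthonormal.exists_orthonormalBasis_extension_of_card_eq
      (by simp [hm]) hs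
    exact ⟨b, fun i => by
      have := hb (Fin.castLE hnm i) ⟨i, rfl⟩
      simpa [hu] using this⟩
  obtain ⟨b₁, hb₁⟩ := key wG hwGo
  obtain ⟨b₂, hb₂⟩ := key w'G hw'Go
  set φ : G ≃ₗᵢ[ℂ] G := b₁.repr.trans b₂.repr.symm with hφ
  have hφmap : ∀ i, φ (wG i) = w'G i := by
    intro i
    rw [hφ, ← hb₁ i, ← hb₂ i]
    simp [LinearIsometryEquiv.trans_apply, b₁.repr_self, b₂.repr_symm_single]
  refine ⟨extendU G φ, fun i => ?_⟩
  have : w i = ((wG i : G) : E) := rfl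
  rw [this, extendU_coe, hφmap]

lemma pair_map [CompleteSpace E] {a b c d : E} (ha : a ≠ 0)
    (hac : ‖a‖ = ‖c‖) (hbd : ‖b‖ = ‖d‖) (hinner : ⟪a, b⟫ = ⟪c, d⟫) :
    ∃ V : E ≃ₗᵢ[ℂ] E, V a = c ∧ V b = d := by
  have hc : c ≠ 0 := by
    intro h
    exact ha (norm_eq_zero.mp (by rw [hac, h, norm_zero]))
  have na : (‖a‖ : ℂ) ≠ 0 := by simpa using (norm_ne_zero_iff.mpr ha)
  have nc : (‖c‖ : ℂ) ≠ 0 := by simpa using (norm_ne_zero_iff.mpr hc)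
  set u : E := (‖a‖ : ℂ)⁻¹ • a with hu
  set u' : E := (‖c‖ : ℂ)⁻¹ • c with hu'
  have hun : ‖u‖ = 1 := by
    rw [hu, norm_smul, norm_inv, Complex.norm_real, Real.norm_of_nonneg (norm_nonneg a),
      inv_mul_cancel₀ (norm_ne_zero_iff.mpr ha)]
  have hu'n : ‖u'‖ = 1 := by
    rw [hu', norm_smul, norm_inv, Complex.norm_real, Real.norm_of_nonneg (norm_nonneg c),
      inv_mul_cancel₀ (norm_ne_zero_iff.mpr hc)]
  have huu : ⟪u, u⟫ = 1 := by rw [inner_self_eq_norm_sq_to_K, hun]; norm_num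
  have hu'u' : ⟪u', u'⟫ = 1 := by rw [inner_self_eq_norm_sq_to_K, hu'n]; norm_num
  set t : ℂ := ⟪u, b⟫ with ht
  have ht' : ⟪u', d⟫ = t := by
    rw [ht, hu, hu', inner_smul_left, inner_smul_left, map_inv₀, map_inv₀,
      Complex.conj_ofReal, Complex.conj_ofReal, hac, hinner]
  set b' : E := b - t • u with hb'def
  set d' : E := d - t • u' with hd'def
  have hub' : ⟪u, b'⟫ = 0 := by
    rw [hb'def, inner_sub_right, inner_smul_right, huu, mul_one, ← ht, sub_self]
  have hu'd' : ⟪u', d'⟫ = 0 := by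
    rw [hd'def, inner_sub_right, inner_smul_right, hu'u', mul_one, ht', sub_self]
  have hbb : ⟪b, b⟫ = ⟪d, d⟫ := by
    rw [inner_self_eq_norm_sq_to_K, inner_self_eq_norm_sq_to_K, hbd]
  have hb'd' : ‖b'‖ = ‖d'‖ := by
    have hbu : ⟪b, u⟫ = conj t := by rw [← inner_conj_symm, ← ht]
    have hdu : ⟪d, u'⟫ = conj t := by rw [← inner_conj_symm, ht']
    have h1 : ⟪b', b'⟫ = ⟪b, b⟫ - t * conj t := by
      simp only [hb'def, inner_sub_left, inner_sub_right, inner_smul_left, inner_smul_right,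
        huu, hbu, ← ht]
      ring
    have h2 : ⟪d', d'⟫ = ⟪d, d⟫ - t * conj t := by
      simp only [hd'def, inner_sub_left, inner_sub_right, inner_smul_left, inner_smul_right,
        hu'u', hdu, ht']
      ring
    have h3 : ⟪b', b'⟫ = ⟪d', d'⟫ := by rw [h1, h2, hbb]
    rw [inner_self_eq_norm_sq_to_K, inner_self_eq_norm_sq_to_K] at h3
    have h4 : (‖b'‖ : ℝ) ^ 2 = (‖d'‖ : ℝ) ^ 2 := by exact_mod_cast h3
    have h5 : ‖b'‖ * ‖b'‖ = ‖d'‖ * ‖d'‖ := by rw [← pow_two, ← pow_two]; exact h4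
    exact (mul_self_inj (norm_nonneg _) (norm_nonneg _)).mp h5
  have haU : a = (‖a‖ : ℂ) • u := by rw [hu, smul_inv_smul₀ na]
  have hcU : c = (‖c‖ : ℂ) • u' := by rw [hu', smul_inv_smul₀ nc]
  by_cases hb0 : b' = 0
  · have hd0 : d' = 0 := by rw [← norm_eq_zero, ← hb'd', hb0, norm_zero]
    have hbu : b = t • u := by rwa [hb'def, sub_eq_zero] at hb0
    have hdu : d = t • u' := by rwa [hd'def, sub_eq_zero] at hd0
    have how : Orthonormal ℂ (fun _ : Fin 1 => u) := by
      rw [orthonormal_iff_ite]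
      intro i j
      rw [Subsingleton.elim i j, huu, if_pos rfl]
    have how' : Orthonormal ℂ (fun _ : Fin 1 => u') := by
      rw [orthonormal_iff_ite]
      intro i j
      rw [Subsingleton.elim i j, hu'u', if_pos rfl]
    obtain ⟨V, hV⟩ := ortho_pair how how'
    have hVu : V u = u' := hV 0
    refine ⟨V, ?_, ?_⟩
    · rw [haU, _root_.map_smul, hVu, hac]; exact hcU.symm
    · rw [hbu, _root_.map_smul, hVu]; exact hdu.symm
  · have hd0 : d' ≠ 0 := by rw [← norm_ne_zero_iff, ← hb'd', norm_ne_zero_iff]; exact hb0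
    have nb' : (‖b'‖ : ℂ) ≠ 0 := by simpa using (norm_ne_zero_iff.mpr hb0)
    have nd' : (‖d'‖ : ℂ) ≠ 0 := by simpa using (norm_ne_zero_iff.mpr hd0)
    set v : E := (‖b'‖ : ℂ)⁻¹ • b' with hv
    set v' : E := (‖d'‖ : ℂ)⁻¹ • d' with hv'
    have hvn : ‖v‖ = 1 := by
      rw [hv, norm_smul, norm_inv, Complex.norm_real, Real.norm_of_nonneg (norm_nonneg b'),
        inv_mul_cancel₀ (norm_ne_zero_iff.mpr hb0)]
    have hv'n : ‖v'‖ = 1 := by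
      rw [hv', norm_smul, norm_inv, Complex.norm_real, Real.norm_of_nonneg (norm_nonneg d'),
        inv_mul_cancel₀ (norm_ne_zero_iff.mpr hd0)]
    have hvv : ⟪v, v⟫ = 1 := by rw [inner_self_eq_norm_sq_to_K, hvn]; norm_num
    have hv'v' : ⟪v', v'⟫ = 1 := by rw [inner_self_eq_norm_sq_to_K, hv'n]; norm_num
    have huv : ⟪u, v⟫ = 0 := by rw [hv, inner_smul_right, hub', mul_zero]
    have hu'v' : ⟪u', v'⟫ = 0 := by rw [hv', inner_smul_right, hu'd', mul_zero]
    have hvu : ⟪v, u⟫ = 0 := by rw [← inner_conj_symm, huv, map_zero]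
    have hv'u' : ⟪v', u'⟫ = 0 := by rw [← inner_conj_symm, hu'v', map_zero]
    have how : Orthonormal ℂ ![u, v] := by
      rw [orthonormal_iff_ite]
      intro i j
      fin_cases i <;> fin_cases j <;> simp [huu, hvv, huv, hvu, hun, hvn]
    have how' : Orthonormal ℂ ![u', v'] := by
      rw [orthonormal_iff_ite]
      intro i j
      fin_cases i <;> fin_cases j <;> simp [hu'u', hv'v', hu'v', hv'u', hu'n, hv'n]
    obtain ⟨V, hV⟩ := ortho_pair how how'
    have hVu : V u = u' := by simpa using hV 0
    have hVv : V v = v' := by simpa using hV 1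
    have hbv : b = t • u + (‖b'‖ : ℂ) • v := by
      rw [hv, smul_inv_smul₀ nb', hb'def]; abel
    have hdv : d = t • u' + (‖d'‖ : ℂ) • v' := by
      rw [hv', smul_inv_smul₀ nd', hd'def]; abel
    refine ⟨V, ?_, ?_⟩
    · rw [haU, _root_.map_smul, hVu, hac]; exact hcU.symm
    · rw [hbv, map_add, _root_.map_smul, hVu, _root_.map_smul, hVv, hb'd']
      exact hdv.symm


/-- Two nonzero rank-one operators `x₁⊙y₁` and `x₂⊙y₂` (where
`(x⊙y)ξ = ⟨ξ,y⟩x`, i.e. `⟪y,ξ⟫ • x` in Mathlib's convention) on Hilbert spaces `E₁, E₂` are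
unitarily equivalent iff the Hilbert dimensions agree (equivalently `E₁ ≃ₗᵢ E₂`),
`‖x₁‖‖y₁‖ = ‖x₂‖‖y₂‖`, and `⟨x₁,y₁⟩ = ⟨x₂,y₂⟩`. -/
theorem stmt5 (E₁ E₂ : Type) [NormedAddCommGroup E₁] [InnerProductSpace ℂ E₁] [CompleteSpace E₁]
    [NormedAddCommGroup E₂] [InnerProductSpace ℂ E₂] [CompleteSpace E₂]
    (x₁ y₁ : E₁) (x₂ y₂ : E₂) (h₁ : x₁ ≠ 0 ∧ y₁ ≠ 0) (h₂ : x₂ ≠ 0 ∧ y₂ ≠ 0) :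
    (∃ U : E₁ ≃ₗᵢ[ℂ] E₂,
        ∀ ξ : E₁, U ((inner ℂ y₁ ξ : ℂ) • x₁) = (inner ℂ y₂ (U ξ) : ℂ) • x₂) ↔
      (Nonempty (E₁ ≃ₗᵢ[ℂ] E₂) ∧ ‖x₁‖ * ‖y₁‖ = ‖x₂‖ * ‖y₂‖ ∧
        (inner ℂ y₁ x₁ : ℂ) = (inner ℂ y₂ x₂ : ℂ)) := by
  obtain ⟨hx₁, hy₁⟩ := h₁
  obtain ⟨hx₂, hy₂⟩ := h₂
  constructor
  · rintro ⟨U, hU⟩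
    have hU' : ∀ ξ : E₁, (inner ℂ y₁ ξ : ℂ) • U x₁ = (inner ℂ y₂ (U ξ) : ℂ) • x₂ := by
      intro ξ; rw [← _root_.map_smul]; exact hU ξ
    have hy₁n : (inner ℂ y₁ y₁ : ℂ) ≠ 0 := by
      rw [Ne, inner_self_eq_zero]; exact hy₁
    have h1 : (inner ℂ y₁ y₁ : ℂ) • U x₁ = (inner ℂ y₂ (U y₁) : ℂ) • x₂ := hU' y₁
    set cc : ℂ := ((inner ℂ y₁ y₁ : ℂ))⁻¹ * (inner ℂ y₂ (U y₁)) with hccdef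
    have hUx₁ : U x₁ = cc • x₂ := by
      calc U x₁ = (((inner ℂ y₁ y₁ : ℂ))⁻¹ * (inner ℂ y₁ y₁ : ℂ)) • U x₁ := by
            rw [inv_mul_cancel₀ hy₁n, one_smul]
        _ = ((inner ℂ y₁ y₁ : ℂ))⁻¹ • ((inner ℂ y₁ y₁ : ℂ) • U x₁) := by rw [mul_smul]
        _ = ((inner ℂ y₁ y₁ : ℂ))⁻¹ • ((inner ℂ y₂ (U y₁) : ℂ) • x₂) := by rw [h1]
        _ = cc • x₂ := by rw [smul_smul]
    have hcc : cc ≠ 0 := by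
      intro h
      apply hx₁
      rw [← U.map_eq_zero_iff, hUx₁, h, zero_smul]
    have hk : ∀ ξ : E₁, (inner ℂ y₂ (U ξ) : ℂ) = cc * inner ℂ y₁ ξ := by
      intro ξ
      have h := hU' ξ
      rw [hUx₁, smul_smul] at h
      have h2 : ((inner ℂ y₁ ξ : ℂ) * cc - inner ℂ y₂ (U ξ)) • x₂ = 0 := by
        rw [sub_smul, h, sub_self]
      have h3 := (smul_eq_zero.mp h2).resolve_right hx₂
      have h4 := sub_eq_zero.mp h3
      rw [← h4]; ring
    have hy₂U : y₂ = conj cc • U y₁ := by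
      have key : ∀ η : E₂, (inner ℂ (y₂ - conj cc • U y₁) η : ℂ) = 0 := by
        intro η
        obtain ⟨ξ, rfl⟩ := U.surjective η
        rw [inner_sub_left, inner_smul_left, Complex.conj_conj, U.inner_map_map, hk ξ]
        ring
      have h5 := key (y₂ - conj cc • U y₁)
      rwa [inner_self_eq_zero, sub_eq_zero] at h5
    have hx₂U : x₂ = cc⁻¹ • U x₁ := by rw [hUx₁, inv_smul_smul₀ hcc]
    have hccn : ‖cc‖ ≠ 0 := norm_ne_zero_iff.mpr hcc
    refine ⟨⟨U⟩, ?_, ?_⟩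
    · have e1 : ‖x₂‖ = ‖cc‖⁻¹ * ‖x₁‖ := by
        rw [hx₂U, norm_smul, norm_inv, U.norm_map]
      have e2 : ‖y₂‖ = ‖cc‖ * ‖y₁‖ := by
        rw [hy₂U, norm_smul, RCLike.norm_conj, U.norm_map]
      have e3 : ‖cc‖⁻¹ * ‖x₁‖ * (‖cc‖ * ‖y₁‖) = ‖cc‖⁻¹ * ‖cc‖ * (‖x₁‖ * ‖y₁‖) := by ring
      rw [e1, e2, e3, inv_mul_cancel₀ hccn, one_mul]
    · rw [hy₂U, hx₂U, inner_smul_left, inner_smul_right, Complex.conj_conj, U.inner_map_map]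
      field_simp
  · rintro ⟨⟨W⟩, hnorm, hip⟩
    have hx₁n : ‖x₁‖ ≠ 0 := norm_ne_zero_iff.mpr hx₁
    have hx₂n : ‖x₂‖ ≠ 0 := norm_ne_zero_iff.mpr hx₂
    set r : ℝ := ‖x₁‖ / ‖x₂‖ with hr
    set s : ℝ := ‖x₂‖ / ‖x₁‖ with hs
    have hrpos : 0 < r := div_pos (norm_pos_iff.mpr hx₁) (norm_pos_iff.mpr hx₂)
    have hspos : 0 < s := div_pos (norm_pos_iff.mpr hx₂) (norm_pos_iff.mpr hx₁)
    have hrs : r * s = 1 := by rw [hr, hs]; field_simp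
    have ha : W x₁ ≠ 0 := fun h => hx₁ (W.injective (by rw [h, map_zero]))
    have hac : ‖W x₁‖ = ‖(r : ℂ) • x₂‖ := by
      rw [W.norm_map, norm_smul, Complex.norm_real, Real.norm_of_nonneg hrpos.le, hr]
      field_simp
    have hbd : ‖W y₁‖ = ‖(s : ℂ) • y₂‖ := by
      rw [W.norm_map, norm_smul, Complex.norm_real, Real.norm_of_nonneg hspos.le, hs]
      rw [div_mul_eq_mul_div, eq_div_iff hx₁n]
      rw [← hnorm]
      ring
    have hinner : (inner ℂ (W x₁) (W y₁) : ℂ) = inner ℂ ((r : ℂ) • x₂) ((s : ℂ) • y₂) := by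
      rw [W.inner_map_map, inner_smul_left, inner_smul_right, Complex.conj_ofReal]
      have h6 : (inner ℂ x₁ y₁ : ℂ) = inner ℂ x₂ y₂ := by
        rw [← inner_conj_symm x₁ y₁, ← inner_conj_symm x₂ y₂, hip]
      rw [h6, ← mul_assoc, ← Complex.ofReal_mul, hrs]
      simp
    obtain ⟨V, hVa, hVb⟩ := pair_map ha hac hbd hinner
    set U : E₁ ≃ₗᵢ[ℂ] E₂ := W.trans V with hUdef
    have hUx : U x₁ = (r : ℂ) • x₂ := hVa
    have hUy : U y₁ = (s : ℂ) • y₂ := hVb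
    have hrs' : (s : ℂ) * (r : ℂ) = 1 := by
      rw [← Complex.ofReal_mul, mul_comm s r, hrs, Complex.ofReal_one]
    refine ⟨U, fun ξ => ?_⟩
    rw [_root_.map_smul, hUx]
    have h7 : (inner ℂ y₁ ξ : ℂ) = inner ℂ (U y₁) (U ξ) := (U.inner_map_map y₁ ξ).symm
    rw [h7, hUy, inner_smul_left, Complex.conj_ofReal, smul_smul]
    have h8 : (s : ℂ) * (inner ℂ y₂ (U ξ) : ℂ) * r = inner ℂ y₂ (U ξ) := by
      rw [mul_comm (s : ℂ) _, mul_assoc, hrs', mul_one]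
    rw [h8]

end
end

section
/- Let B be an inner function, (h_i) an orthonormal family in K_B = H² ⊖ BH², and j ≠ j′ integers. Then the functions h_i B^j and h_{i′} B^{j′} (boundary functions in L²(𝕋)) are orthogonal, and ⟨h_i B^j, h_{i′} B^j⟩ = ⟨h_i, h_{i′}⟩. Consequently (h_i B^j)_{i,j∈ℤ} is an orthonormal family in L²(𝕋). -/
open MeasureTheory Complex Submodule
open scoped ENNReal
open scoped ComplexConjugate

noncomputable section

-- AUX LEMMAS
private lemma measurable_zpowC (j : ℤ) : Measurable (fun z : ℂ => z ^ j) := by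
  rcases j with n | n
  · simpa using measurable_id.pow_const n
  · have he : (fun z : ℂ => z ^ (Int.negSucc n)) = fun z => (z ^ (n + 1))⁻¹ := by
      funext z; rw [zpow_negSucc]
    rw [he]
    exact (measurable_id.pow_const (n + 1)).inv

private lemma toL2_coe {g : 𝕋m → ℂ} (hg : MemLp g 2 μT) : ⇑(toL2 g) =ᵐ[μT] g := by
  unfold toL2
  rw [dif_pos hg]
  exact hg.coeFn_toLp

private lemma toL2_coeFn (f : L2) : toL2 ⇑f = f := by
  unfold toL2
  rw [dif_pos (Lp.memLp f)]
  exact Lp.toLp_coeFn f _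

private lemma toL2_congr {g₁ g₂ : 𝕋m → ℂ} (hg : MemLp g₁ 2 μT) (hfg : g₁ =ᵐ[μT] g₂) :
    toL2 g₁ = toL2 g₂ := by
  unfold toL2
  rw [dif_pos hg, dif_pos (hg.ae_eq hfg)]
  exact MemLp.toLp_congr _ _ hfg

private lemma aesm_zpow (B : L2) (j : ℤ) : AEStronglyMeasurable (fun x => B x ^ j) μT :=
  ((measurable_zpowC j).comp_aemeasurable
    (Lp.aestronglyMeasurable B).aemeasurable).aestronglyMeasurable

private lemma memℒp_mul_zpow (B : L2) (hB1 : ∀ᵐ x ∂μT, ‖B x‖ = 1) (f : L2) (j : ℤ) :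
    MemLp (fun x => f x * B x ^ j) 2 μT := by
  apply MemLp.of_le_mul (c := 1) (Lp.memLp f)
    ((Lp.aestronglyMeasurable f).mul (aesm_zpow B j))
  filter_upwards [hB1] with x hx
  simp only [Pi.mul_apply]
  rw [norm_mul, norm_zpow, hx, one_zpow, mul_one, one_mul]

private lemma mem_orthogonal_span' {s : Set L2} {v : L2}
    (hv : ∀ u ∈ s, (inner ℂ u v : ℂ) = 0) : v ∈ (Submodule.span ℂ s)ᗮ := by
  rw [Submodule.mem_orthogonal]
  intro u hu
  induction hu using Submodule.span_induction with
  | mem x hx => exact hv x hx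
  | zero => simp
  | add x y _ _ hx hy => rw [inner_add_left, hx, hy, add_zero]
  | smul c x _ hx => rw [inner_smul_left, hx, mul_zero]

private lemma coeff_zero_of_H2 {f : L2} (hf : f ∈ H2) {n : ℤ} (hn : n < 0) :
    fourierCoeff (⇑f) n = 0 := by
  have h1 : fourierLp 2 n ∈ negSpan := Submodule.subset_span ⟨n, hn, rfl⟩
  have h2 : (inner ℂ (fourierLp 2 n) f : ℂ) = 0 :=
    (Submodule.mem_orthogonal negSpan f).1 hf _ h1
  rw [← fourierBasis_repr, HilbertBasis.repr_apply_apply, coe_fourierBasis]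
  exact h2

private lemma inner_g_eq (B : L2) (hB1 : ∀ᵐ x ∂μT, ‖B x‖ = 1) (u v : L2) (j j' : ℤ) :
    (inner ℂ (toL2 fun x => u x * B x ^ j) (toL2 fun x => v x * B x ^ j') : ℂ)
      = inner ℂ u (toL2 fun x => v x * B x ^ (j' - j)) := by
  rw [MeasureTheory.L2.inner_def, MeasureTheory.L2.inner_def]
  apply integral_congr_ae
  filter_upwards [toL2_coe (memℒp_mul_zpow B hB1 u j), toL2_coe (memℒp_mul_zpow B hB1 v j'),
    toL2_coe (memℒp_mul_zpow B hB1 v (j' - j)), hB1] with x h1 h2 h3 hx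
  rw [RCLike.inner_apply, RCLike.inner_apply, h1, h2, h3]
  have hne : B x ≠ 0 := by
    intro h0; rw [h0, norm_zero] at hx; norm_num at hx
  have habs : ‖B x‖ = 1 := hx
  rw [mul_comm _ (conj _), mul_comm _ (conj _)]
  have hconj : conj (B x) = (B x)⁻¹ := (Complex.inv_eq_conj habs).symm
  have hkey : conj (B x) ^ j * B x ^ j' = B x ^ (j' - j) := by
    rw [hconj, inv_zpow, ← zpow_neg, ← zpow_add₀ hne]
    congr 1; ring
  calc conj (u x * B x ^ j) * (v x * B x ^ j')
      = conj (u x) * v x * (conj (B x) ^ j * B x ^ j') := by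
        rw [map_mul, map_zpow₀]; ring
    _ = conj (u x) * (v x * B x ^ (j' - j)) := by rw [hkey]; ring

private lemma mulB_mem_H2 (B : L2) (hB : IsInner B) {f : L2} (hf : f ∈ H2) :
    toL2 (fun x => B x * f x) ∈ H2 := by
  obtain ⟨hBH2, hB1⟩ := hB
  have hmem : MemLp (fun x => B x * f x) 2 μT := by
    apply MemLp.of_le_mul (c := 1) (Lp.memLp f)
      ((Lp.aestronglyMeasurable B).mul (Lp.aestronglyMeasurable f))
    filter_upwards [hB1] with x hx
    simp [norm_mul, hx]
  apply mem_orthogonal_span'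
  rintro u ⟨n, hn, rfl⟩
  have hwmem : MemLp (fun x => conj (B x) * (fourier n x : ℂ)) 2 μT := by
    apply MemLp.of_bound
      ((Complex.continuous_conj.comp_aestronglyMeasurable (Lp.aestronglyMeasurable B)).mul
        (map_continuous (fourier n)).aestronglyMeasurable) 1
    filter_upwards [hB1] with x hx
    have h1 : ‖(fourier n x : ℂ)‖ = 1 := Circle.norm_coe _
    simp only [Pi.mul_apply, Function.comp_apply]
    rw [norm_mul, RCLike.norm_conj, hx, h1, one_mul]
  set w : L2 := toL2 (fun x => conj (B x) * (fourier n x : ℂ)) with hwdef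
  have step1 : (inner ℂ (fourierLp 2 n) (toL2 fun x => B x * f x) : ℂ) = inner ℂ w f := by
    rw [MeasureTheory.L2.inner_def, MeasureTheory.L2.inner_def]
    apply integral_congr_ae
    filter_upwards [coeFn_fourierLp 2 n, toL2_coe hmem, toL2_coe hwmem] with x h1 h2 h3
    rw [RCLike.inner_apply, RCLike.inner_apply, h1, h2, h3]
    rw [map_mul, Complex.conj_conj]
    ring
  have key : ∀ k : ℤ, 0 ≤ k → (inner ℂ w (fourierLp 2 k) : ℂ) = 0 := by
    intro k hk
    have heq : (inner ℂ w (fourierLp 2 k) : ℂ) = fourierCoeff (⇑B) (n - k) := by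
      rw [MeasureTheory.L2.inner_def, fourierCoeff]
      apply integral_congr_ae
      filter_upwards [toL2_coe hwmem, coeFn_fourierLp 2 k] with x h1 h2
      rw [RCLike.inner_apply, h1, h2, smul_eq_mul]
      rw [map_mul, Complex.conj_conj]
      have : fourier (-(n - k)) x = conj (fourier n x) * fourier k x := by
        rw [show -(n - k) = -n + k by ring, fourier_add, fourier_neg]
      rw [this]
      ring
    rw [heq]
    exact coeff_zero_of_H2 hBH2 (by omega)
  have hsum := (@fourierBasis (2 * Real.pi) _).hasSum_repr f
  have hsum2 := hsum.mapL (innerSL ℂ w)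
  have hterm : ∀ k : ℤ,
      innerSL ℂ w ((fourierBasis.repr f k : ℂ) • (fourierBasis (T := 2 * Real.pi)) k) = 0 := by
    intro k
    rw [ContinuousLinearMap.map_smul, smul_eq_mul]
    rcases lt_or_ge k 0 with hk | hk
    · rw [fourierBasis_repr, coeff_zero_of_H2 hf hk, zero_mul]
    · have hcoe : (fourierBasis (T := 2 * Real.pi)) k = (fourierLp 2 k : L2) :=
        congrFun coe_fourierBasis k
      rw [innerSL_apply_apply, hcoe, key k hk, mul_zero]
  have hzero : (inner ℂ w f : ℂ) = 0 := by
    have h1 : (innerSL ℂ w) f = 0 := by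
      rw [← hsum2.tsum_eq]
      exact (tsum_congr hterm).trans tsum_zero
    rwa [innerSL_apply_apply] at h1
  rw [step1, hzero]

private lemma memℒp_mul_pow (B : L2) (hB1 : ∀ᵐ x ∂μT, ‖B x‖ = 1) (f : L2) (m : ℕ) :
    MemLp (fun x => f x * B x ^ m) 2 μT := by
  have he : (fun x => f x * B x ^ (m : ℤ)) = fun x => f x * B x ^ m := by
    funext x; rw [zpow_natCast]
  exact he ▸ memℒp_mul_zpow B hB1 f m

private lemma pow_succ_eq (B : L2) (hB1 : ∀ᵐ x ∂μT, ‖B x‖ = 1) (f : L2) (m : ℕ) :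
    toL2 (fun x => f x * B x ^ (m + 1))
      = toL2 (fun x => B x * (toL2 (fun x => f x * B x ^ m) : L2) x) := by
  apply toL2_congr (memℒp_mul_pow B hB1 f (m + 1))
  filter_upwards [toL2_coe (memℒp_mul_pow B hB1 f m)] with x hx
  rw [hx]; ring

private lemma pow_mem_H2 (B : L2) (hB : IsInner B) {f : L2} (hf : f ∈ H2) :
    ∀ m : ℕ, toL2 (fun x => f x * B x ^ m) ∈ H2
  | 0 => by
      have he : (fun x => f x * B x ^ (0 : ℕ)) = ⇑f := by funext x; simp
      rw [he, toL2_coeFn]; exact hf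
  | (m + 1) => by
      rw [pow_succ_eq B hB.2 f m]
      exact mulB_mem_H2 B hB (pow_mem_H2 B hB hf m)

private lemma pow_succ_mem_SH2 (B : L2) (hB : IsInner B) {f : L2} (hf : f ∈ H2) (m : ℕ) :
    toL2 (fun x => f x * B x ^ (m + 1)) ∈ SH2 B := by
  rw [pow_succ_eq B hB.2 f m]
  exact Submodule.subset_span ⟨_, pow_mem_H2 B hB hf m, rfl⟩

/-- For an inner ℂ function `B`, an orthonormal family `(h_i)` in `K_B`, and
`j ≠ j'`, the functions `h_i B^j` and `h_{i'} B^{j'}` are orthogonal in `L²(𝕋)`, while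
`⟪h_i B^j, h_{i'} B^j⟫ = ⟪h_i, h_{i'}⟫`; consequently `(h_i B^j)` is orthonormal. -/
theorem stmt6 (B : L2) (hB : IsInner B) {ι : Type} (h : ι → L2) (hmem : ∀ i, h i ∈ Ksp B)
    (hon : Orthonormal ℂ h) (g : ι × ℤ → L2)
    (hg : ∀ p : ι × ℤ, g p = toL2 (fun x => h p.1 x * B x ^ p.2)) :
    (∀ (i i' : ι) (j j' : ℤ), j ≠ j' → (inner ℂ (g (i, j)) (g (i', j')) : ℂ) = 0) ∧
    (∀ (i i' : ι) (j : ℤ), (inner ℂ (g (i, j)) (g (i', j)) : ℂ) = (inner ℂ (h i) (h i') : ℂ)) ∧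
    Orthonormal ℂ g := by
  classical
  obtain ⟨hBH2, hB1⟩ := hB
  have hgs : ∀ (i : ι) (j : ℤ), g (i, j) = toL2 (fun x => h i x * B x ^ j) :=
    fun i j => hg (i, j)
  have hKle : Ksp B ≤ H2 := Submodule.orthogonal_le le_sup_left
  have claim2 : ∀ (i i' : ι) (j : ℤ),
      (inner ℂ (g (i, j)) (g (i', j)) : ℂ) = (inner ℂ (h i) (h i') : ℂ) := by
    intro i i' j
    rw [hgs, hgs, inner_g_eq B hB1 (h i) (h i') j j]
    congr 1
    have he : (fun x => h i' x * B x ^ (j - j)) = ⇑(h i') := by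
      funext x; rw [sub_self, zpow_zero, mul_one]
    rw [he, toL2_coeFn]
  have claim1lt : ∀ (i i' : ι) (j j' : ℤ), j < j' →
      (inner ℂ (g (i, j)) (g (i', j')) : ℂ) = 0 := by
    intro i i' j j' hlt
    rw [hgs, hgs, inner_g_eq B hB1 (h i) (h i') j j']
    obtain ⟨m, hm⟩ : ∃ m : ℕ, j' - j = (m : ℤ) + 1 := ⟨(j' - j - 1).toNat, by omega⟩
    have he : (fun x => h i' x * B x ^ (j' - j)) = fun x => h i' x * B x ^ (m + 1) := by
      funext x
      rw [hm, ← zpow_natCast]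
      norm_num
    rw [he]
    have hmem' : toL2 (fun x => h i' x * B x ^ (m + 1)) ∈ negSpan ⊔ SH2 B :=
      Submodule.mem_sup_right (pow_succ_mem_SH2 B ⟨hBH2, hB1⟩ (hKle (hmem i')) m)
    exact Submodule.inner_left_of_mem_orthogonal hmem' (hmem i)
  have claim1 : ∀ (i i' : ι) (j j' : ℤ), j ≠ j' →
      (inner ℂ (g (i, j)) (g (i', j')) : ℂ) = 0 := by
    intro i i' j j' hne
    rcases lt_or_gt_of_ne hne with hlt | hgt
    · exact claim1lt i i' j j' hlt
    · rw [← inner_conj_symm, claim1lt i' i j' j hgt, map_zero]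
  refine ⟨claim1, claim2, ?_⟩
  rw [orthonormal_iff_ite]
  rintro ⟨i, j⟩ ⟨i', j'⟩
  by_cases hjj : j = j'
  · subst hjj
    rw [claim2 i i' j, orthonormal_iff_ite.1 hon i i']
    simp [Prod.ext_iff]
  · rw [claim1 i i' j j' hjj]
    simp [Prod.ext_iff, hjj]

end
end
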